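/- arXiv:2403.05520 — 2 statements merged into one kernel-verified Lean document; each statement's English description precedes it below -/
import Mathlib

section
/- Let X be a real Banach space, σ ∈ ℝ, λ ∈ ℝ, B, f : X → X arbitrary maps, h : [σ,∞) → X a function, and a : X → ℝ continuous with a(x) ≥ m > 0 for all x ∈ X. Suppose w : [σ,∞) → X is continuous and, for every τ > σ, differentiable at τ with w′(τ) = a(w(τ)) • B(w(τ)) + λ • f(w(τ)) + h(τ). Define θ(τ) = σ + ∫_σ^τ a(w(r)) dr. Then θ is a strictly increasing continuous bijection of [σ,∞) onto itself, the function u := w ∘ θ⁻¹ is differentiable at every t > σ with u′(t) = B(u(t)) + (a(u(t)))⁻¹ • (λ • f(u(t)) + h(θ⁻¹(t))), and moreover θ⁻¹(t) = σ + ∫_σ^t (a(u(r)))⁻¹ dr; i.e., u solves the time-reparameterized semilinear equation u′(t) = B(u(t)) + [λ f(u(t)) + h(α(t))]/a(u(t)) with α(t) = σ + ∫_σ^t a(u(r))⁻¹ dr. -/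
open Set MeasureTheory intervalIntegral

/-- From the quasilinear equation `w' = a(w) • B(w) + λ • f(w) + h(τ)` to the semilinear one:
the reparameterization `θ τ = σ + ∫_σ^τ a(w(r)) dr` is a strictly increasing continuous bijection
of `[σ,∞)` onto itself, `u := w ∘ θ⁻¹` solves
`u' = B(u) + a(u)⁻¹ • (λ • f(u) + h(θ⁻¹ t))`, and `θ⁻¹ t = σ + ∫_σ^t a(u(r))⁻¹ dr`. -/
theorem stmt3 {X : Type*} [NormedAddCommGroup X] [NormedSpace ℝ X] [CompleteSpace X]
    (σ lam m : ℝ) (hm : 0 < m)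
    (B f : X → X) (h : ℝ → X)
    (a : X → ℝ) (ha : Continuous a) (ham : ∀ x, m ≤ a x)
    (w : ℝ → X) (hw : ContinuousOn w (Ici σ))
    (hde : ∀ τ > σ, HasDerivAt w (a (w τ) • B (w τ) + lam • f (w τ) + h τ) τ)
    (θ : ℝ → ℝ) (hθ : ∀ τ, θ τ = σ + ∫ r in σ..τ, a (w r)) :
    StrictMonoOn θ (Ici σ) ∧ ContinuousOn θ (Ici σ) ∧ BijOn θ (Ici σ) (Ici σ) ∧
    ∃ θinv : ℝ → ℝ, MapsTo θinv (Ici σ) (Ici σ) ∧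
      (∀ τ ≥ σ, θinv (θ τ) = τ) ∧ (∀ t ≥ σ, θ (θinv t) = t) ∧
      (∀ t > σ, HasDerivAt (w ∘ θinv)
        (B ((w ∘ θinv) t) + (a ((w ∘ θinv) t))⁻¹ • (lam • f ((w ∘ θinv) t) + h (θinv t))) t) ∧
      (∀ t ≥ σ, θinv t = σ + ∫ r in σ..t, (a ((w ∘ θinv) r))⁻¹) := by
  set g : ℝ → ℝ := fun r => a (w r) with hgdef
  have hgc : ContinuousOn g (Ici σ) := ha.comp_continuousOn hw
  have hgm : ∀ r, m ≤ g r := fun r => ham _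
  have hgpos : ∀ r, 0 < g r := fun r => hm.trans_le (hgm r)
  -- generic integrability of continuous functions on `[σ,∞)`
  have hintgen : ∀ (G : ℝ → ℝ), ContinuousOn G (Ici σ) →
      ∀ x y, σ ≤ x → σ ≤ y → IntervalIntegrable G volume x y := by
    intro G hGc x y hx hy
    apply (hGc.mono ?_).intervalIntegrable
    intro z hz
    exact le_trans (le_min hx hy) hz.1
  have hint : ∀ x y, σ ≤ x → σ ≤ y → IntervalIntegrable g volume x y := hintgen g hgc
  have hθσ : θ σ = σ := by simp [hθ]
  -- lower bound for increments
  have hsub : ∀ x y, σ ≤ x → x ≤ y → m * (y - x) ≤ θ y - θ x := by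
    intro x y hx hxy
    have h1 : θ y - θ x = ∫ r in x..y, g r := by
      rw [hθ x, hθ y, add_sub_add_left_eq_sub]
      exact integral_interval_sub_left (hint σ y le_rfl (hx.trans hxy)) (hint σ x le_rfl hx)
    have h2 : (∫ _r in x..y, m) ≤ ∫ r in x..y, g r :=
      integral_mono_on hxy intervalIntegrable_const (hint x y hx (hx.trans hxy))
        fun z _ => hgm z
    rw [intervalIntegral.integral_const, smul_eq_mul] at h2
    rw [h1]; linarith [h2, mul_comm m (y - x)]
  have hmono : StrictMonoOn θ (Ici σ) := by
    intro x hx y _ hxy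
    have := hsub x y hx hxy.le
    nlinarith [mul_pos hm (sub_pos.2 hxy)]
  -- continuity of primitives on [σ,∞)
  have hprim : ∀ (G : ℝ → ℝ), (∀ x y, σ ≤ x → σ ≤ y → IntervalIntegrable G volume x y) →
      ContinuousOn (fun t => σ + ∫ r in σ..t, G r) (Ici σ) := by
    intro G hG τ hτ
    have hττ : σ ≤ τ + 1 := le_trans hτ (by linarith)
    have hcc : ContinuousOn (fun t => σ + ∫ r in σ..t, G r) (uIcc σ (τ + 1)) :=
      continuousOn_const.add
        (continuousOn_primitive_interval' (hG σ (τ + 1) le_rfl hττ) left_mem_uIcc)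
    rw [uIcc_of_le hττ] at hcc
    have h1 : ContinuousWithinAt (fun t => σ + ∫ r in σ..t, G r) (Icc σ (τ + 1)) τ :=
      hcc τ ⟨hτ, by linarith⟩
    apply h1.mono_of_mem_nhdsWithin
    rw [← Ici_inter_Iic]
    exact Filter.inter_mem self_mem_nhdsWithin
      (mem_nhdsWithin_of_mem_nhds (Iic_mem_nhds (by linarith)))
  have hθc : ContinuousOn θ (Ici σ) := by
    have : θ = fun t => σ + ∫ r in σ..t, g r := funext hθ
    rw [this]; exact hprim g hint
  -- θ maps Ici σ to Ici σ
  have hmapθ : MapsTo θ (Ici σ) (Ici σ) := by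
    intro τ hτ
    have h1 := hsub σ τ le_rfl (mem_Ici.1 hτ)
    rw [hθσ] at h1
    have h2 : (0:ℝ) ≤ m * (τ - σ) := mul_nonneg hm.le (sub_nonneg.2 (mem_Ici.1 hτ))
    exact mem_Ici.2 (by linarith)
  have hsurj : SurjOn θ (Ici σ) (Ici σ) := by
    intro y hy
    have hy' : σ ≤ y := hy
    set T := σ + (y - σ) / m with hT_def
    have hT : σ ≤ T := by
      have h0 : (0:ℝ) ≤ (y - σ) / m := div_nonneg (by linarith) hm.le
      rw [hT_def]; linarith
    have hmT : m * (T - σ) = y - σ := by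
      have hm0 : m ≠ 0 := ne_of_gt hm
      rw [hT_def]; field_simp; ring
    have hθT : y ≤ θ T := by
      have := hsub σ T le_rfl hT
      rw [hθσ, hmT] at this; linarith
    have hIVT := intermediate_value_Icc hT (hθc.mono Icc_subset_Ici_self)
    obtain ⟨x, hx, hxy⟩ := hIVT ⟨by rw [hθσ]; exact hy', hθT⟩
    exact ⟨x, Icc_subset_Ici_self hx, hxy⟩
  have hbij : BijOn θ (Ici σ) (Ici σ) := ⟨hmapθ, hmono.injOn, hsurj⟩
  refine ⟨hmono, hθc, hbij, ?_⟩
  set θinv : ℝ → ℝ := Function.invFunOn θ (Ici σ) with hinv_def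
  have hinvon : InvOn θinv θ (Ici σ) (Ici σ) := hbij.invOn_invFunOn
  have hleft : ∀ τ ≥ σ, θinv (θ τ) = τ := fun τ hτ => hinvon.1 hτ
  have hright : ∀ t ≥ σ, θ (θinv t) = t := fun t ht => hinvon.2 ht
  have hmapinv : MapsTo θinv (Ici σ) (Ici σ) := by
    intro t ht
    obtain ⟨τ, hτ, rfl⟩ := hsurj ht
    rw [hleft τ hτ]; exact hτ
  have hinvσ : θinv σ = σ := by
    have := hleft σ le_rfl
    rwa [hθσ] at this
  have hinvmono : StrictMonoOn θinv (Ici σ) := by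
    intro t1 h1 t2 h2 h12
    rcases lt_or_ge (θinv t1) (θinv t2) with hlt | hle
    · exact hlt
    · exfalso
      have : t2 ≤ t1 := by
        have := hmono.monotoneOn (hmapinv h2) (hmapinv h1) hle
        rwa [hright t1 h1, hright t2 h2] at this
      linarith
  have hinvgt : ∀ t > σ, σ < θinv t := by
    intro t ht
    have := hinvmono (le_refl σ) (mem_Ici.2 ht.le) ht
    rwa [hinvσ] at this
  have himg : θinv '' Ici σ = Ici σ := by
    apply Subset.antisymm (hmapinv.image_subset)
    intro τ hτ
    exact ⟨θ τ, hmapθ hτ, hleft τ hτ⟩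
  -- derivative of θ
  have hθd : ∀ τ > σ, HasDerivAt θ (g τ) τ := by
    intro τ hτ
    have hmeas : StronglyMeasurableAtFilter g (nhds τ) volume :=
      ContinuousOn.stronglyMeasurableAtFilter isOpen_Ioi (hgc.mono Ioi_subset_Ici_self) τ hτ
    have hca : ContinuousAt g τ := (hgc τ hτ.le).continuousAt (Ici_mem_nhds hτ)
    have h1 : HasDerivAt (fun t => ∫ r in σ..t, g r) (g τ) τ :=
      integral_hasDerivAt_right (hint σ τ le_rfl hτ.le) hmeas hca
    have h2 := h1.const_add σ
    have : θ = fun t => σ + ∫ r in σ..t, g r := funext hθ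
    rw [this]; exact h2
  -- continuity of θinv
  have hinvca : ∀ t > σ, ContinuousAt θinv t := by
    intro t ht
    refine hinvmono.continuousAt_of_image_mem_nhds (Ici_mem_nhds ht) ?_
    rw [himg]
    exact Ici_mem_nhds (hinvgt t ht)
  have hinvc : ContinuousOn θinv (Ici σ) := by
    intro t ht
    rcases eq_or_lt_of_le (mem_Ici.1 ht) with heq | ht'
    · subst heq
      refine hinvmono.continuousWithinAt_right_of_surjOn self_mem_nhdsWithin ?_
      intro y hy
      rw [hinvσ] at hy
      exact ⟨θ y, hmapθ (show σ ≤ y from le_of_lt hy), hleft y (le_of_lt hy)⟩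
    · exact (hinvca t ht').continuousWithinAt
  -- derivative of θinv
  have hinvd : ∀ t > σ, HasDerivAt θinv (g (θinv t))⁻¹ t := by
    intro t ht
    have hτ : σ < θinv t := hinvgt t ht
    have hd : HasDerivAt θ (g (θinv t)) (θinv t) := hθd _ hτ
    have hne : g (θinv t) ≠ 0 := ne_of_gt (hgpos _)
    have hfg : ∀ᶠ y in nhds t, θ (θinv y) = y := by
      filter_upwards [Ioi_mem_nhds ht] with y hy
      exact hright y (le_of_lt hy)
    exact HasDerivAt.of_local_left_inverse (hinvca t ht) hd hne hfg
  -- derivative of u = w ∘ θinv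
  have hud : ∀ t > σ, HasDerivAt (w ∘ θinv)
      (B ((w ∘ θinv) t) + (a ((w ∘ θinv) t))⁻¹ • (lam • f ((w ∘ θinv) t) + h (θinv t))) t := by
    intro t ht
    have hτ : σ < θinv t := hinvgt t ht
    have hwd := hde (θinv t) hτ
    have hcomp := HasDerivAt.scomp t hwd (hinvd t ht)
    have hne : a (w (θinv t)) ≠ 0 := ne_of_gt (hgpos _)
    convert hcomp using 1
    show B (w (θinv t)) + (a (w (θinv t)))⁻¹ • (lam • f (w (θinv t)) + h (θinv t)) =
      (a (w (θinv t)))⁻¹ • (a (w (θinv t)) • B (w (θinv t)) + lam • f (w (θinv t)) + h (θinv t))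
    simp only [smul_add, smul_smul, inv_mul_cancel₀ hne, one_smul, add_assoc]
  -- the integral formula for θinv
  have huc : ContinuousOn (w ∘ θinv) (Ici σ) := hw.comp hinvc hmapinv
  have hGc : ContinuousOn (fun r => (a ((w ∘ θinv) r))⁻¹) (Ici σ) :=
    (ha.comp_continuousOn huc).inv₀ fun r _ => ne_of_gt (hm.trans_le (ham _))
  have hGint := hintgen _ hGc
  set φ : ℝ → ℝ := fun t => σ + ∫ r in σ..t, (a ((w ∘ θinv) r))⁻¹ with hφdef
  have hφσ : φ σ = σ := by simp [hφdef]
  have hφc : ContinuousOn φ (Ici σ) := hprim _ hGint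
  have hφd : ∀ t > σ, HasDerivAt φ (g (θinv t))⁻¹ t := by
    intro t ht
    have hmeas : StronglyMeasurableAtFilter (fun r => (a ((w ∘ θinv) r))⁻¹) (nhds t) volume :=
      ContinuousOn.stronglyMeasurableAtFilter isOpen_Ioi (hGc.mono Ioi_subset_Ici_self) t ht
    have hca : ContinuousAt (fun r => (a ((w ∘ θinv) r))⁻¹) t :=
      (hGc t ht.le).continuousAt (Ici_mem_nhds ht)
    have h1 := integral_hasDerivAt_right (hGint σ t le_rfl ht.le) hmeas hca
    exact h1.const_add σ
  refine ⟨θinv, hmapinv, hleft, hright, hud, ?_⟩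
  intro t ht
  show θinv t = φ t
  rcases eq_or_lt_of_le (ht : σ ≤ t) with heq | ht'
  · rw [← heq, hinvσ, hφσ]
  · -- θinv - φ is constant on (σ, t], and tends to 0 at σ⁺
    set F : ℝ → ℝ := fun s => θinv s - φ s with hFdef
    have hFconst : ∀ s ∈ Ioc σ t, F t = F s := by
      intro s hs
      have hcont : ContinuousOn F (Icc s t) :=
        (hinvc.mono (Icc_subset_Ici_self.trans (Ici_subset_Ici.2 hs.1.le))).sub
          (hφc.mono (Icc_subset_Ici_self.trans (Ici_subset_Ici.2 hs.1.le)))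
      have hder : ∀ x ∈ Ico s t, HasDerivWithinAt F 0 (Ici x) x := by
        intro x hx
        have hx' : σ < x := lt_of_lt_of_le hs.1 hx.1
        have := (hinvd x hx').sub (hφd x hx')
        rw [sub_self] at this
        exact this.hasDerivWithinAt
      have := constant_of_has_deriv_right_zero hcont hder t ⟨hs.2, le_rfl⟩
      exact this
    have hFσ : F σ = 0 := by simp [hFdef, hinvσ, hφσ]
    have hmem : Ioc σ t ∈ nhdsWithin σ (Ioi σ) := Ioc_mem_nhdsGT_of_mem ⟨le_rfl, ht'⟩
    have h1 : Filter.Tendsto F (nhdsWithin σ (Ioi σ)) (nhds (F t)) := by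
      refine Filter.Tendsto.congr' ?_ tendsto_const_nhds
      filter_upwards [hmem] with s hs
      exact hFconst s hs
    have h2 : Filter.Tendsto F (nhdsWithin σ (Ioi σ)) (nhds (F σ)) := by
      have hc : ContinuousWithinAt F (Ici σ) σ :=
        ((hinvc σ self_mem_Ici).sub (hφc σ self_mem_Ici))
      exact hc.tendsto.mono_left (nhdsWithin_mono σ Ioi_subset_Ici_self)
    have : F t = F σ := tendsto_nhds_unique h1 h2
    rw [hFσ] at this
    have : θinv t = φ t := by
      have := sub_eq_zero.1 this
      exact this
    exact this
end

section
/- Let X be a real Banach space, σ ∈ ℝ, λ ∈ ℝ, B, f : X → X arbitrary maps, h : [σ,∞) → X a function, and a : X → ℝ continuous with 0 < m ≤ a(x) ≤ M for all x ∈ X. Suppose u : [σ,∞) → X is continuous and, for every t > σ, differentiable at t with u′(t) = B(u(t)) + (a(u(t)))⁻¹ • (λ • f(u(t)) + h(α(t))), where α(t) = σ + ∫_σ^t (a(u(r)))⁻¹ dr. Then α is a strictly increasing continuous bijection of [σ,∞) onto itself, and the function w := u ∘ α⁻¹ is differentiable at every τ > σ with w′(τ) = a(w(τ)) • B(w(τ))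 + λ • f(w(τ)) + h(τ). -/
open Set MeasureTheory intervalIntegral

/-- From the semilinear equation `u' = B(u) + a(u)⁻¹ • (λ • f(u) + h(α t))`, with
`α t = σ + ∫_σ^t a(u(r))⁻¹ dr`, back to the quasilinear one: `α` is a strictly increasing
continuous bijection of `[σ,∞)` onto itself and `w := u ∘ α⁻¹` solves
`w' = a(w) • B(w) + λ • f(w) + h(τ)`. -/
theorem stmt4 {X : Type*} [NormedAddCommGroup X] [NormedSpace ℝ X] [CompleteSpace X]
    (σ lam m M : ℝ) (hm : 0 < m) (hmM : m ≤ M)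
    (B f : X → X) (h : ℝ → X)
    (a : X → ℝ) (ha : Continuous a) (ham : ∀ x, m ≤ a x) (haM : ∀ x, a x ≤ M)
    (u : ℝ → X) (hu : ContinuousOn u (Ici σ))
    (α : ℝ → ℝ) (hα : ∀ t, α t = σ + ∫ r in σ..t, (a (u r))⁻¹)
    (hde : ∀ t > σ, HasDerivAt u (B (u t) + (a (u t))⁻¹ • (lam • f (u t) + h (α t))) t) :
    StrictMonoOn α (Ici σ) ∧ ContinuousOn α (Ici σ) ∧ BijOn α (Ici σ) (Ici σ) ∧
    ∃ αinv : ℝ → ℝ, MapsTo αinv (Ici σ) (Ici σ) ∧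
      (∀ t ≥ σ, αinv (α t) = t) ∧ (∀ τ ≥ σ, α (αinv τ) = τ) ∧
      ∀ τ > σ, HasDerivAt (u ∘ αinv)
        (a ((u ∘ αinv) τ) • B ((u ∘ αinv) τ) + lam • f ((u ∘ αinv) τ) + h τ) τ := by
  have hM : 0 < M := lt_of_lt_of_le hm hmM
  set g : ℝ → ℝ := fun r => (a (u r))⁻¹ with hg_def
  have hapos : ∀ x, 0 < a x := fun x => lt_of_lt_of_le hm (ham x)
  have hgpos : ∀ r, 0 < g r := fun r => inv_pos.mpr (hapos (u r))
  have hglb : ∀ r, M⁻¹ ≤ g r := fun r =>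
    inv_anti₀ (hapos (u r)) (haM (u r))
  have hgub : ∀ r, g r ≤ m⁻¹ := fun r =>
    inv_anti₀ hm (ham (u r))
  have hgcont : ContinuousOn g (Ici σ) :=
    (ha.comp_continuousOn hu).inv₀ (fun r _ => (hapos (u r)).ne')
  have hgint : ∀ s t, σ ≤ s → σ ≤ t → IntervalIntegrable g volume s t := by
    intro s t hs ht
    exact (hgcont.mono (fun r hr => le_trans (le_min hs ht) hr.1)).intervalIntegrable
  -- difference formula
  have hdiff : ∀ s t, σ ≤ s → σ ≤ t → α t - α s = ∫ r in s..t, g r := by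
    intro s t hs ht
    rw [hα, hα]
    have := intervalIntegral.integral_add_adjacent_intervals
      (hgint σ s le_rfl hs) (hgint s t hs ht)
    rw [← this]; ring
  -- lower and upper bounds on increments
  have hlow : ∀ s t, σ ≤ s → s ≤ t → (t - s) * M⁻¹ ≤ α t - α s := by
    intro s t hs hst
    rw [hdiff s t hs (le_trans hs hst)]
    have : ∫ r in s..t, M⁻¹ ≤ ∫ r in s..t, g r := by
      apply intervalIntegral.integral_mono_on hst intervalIntegrable_const
        (hgint s t hs (le_trans hs hst))
      intro r _; exact hglb r
    simpa using this
  have hup : ∀ s t, σ ≤ s → s ≤ t → α t - α s ≤ (t - s) * m⁻¹ := by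
    intro s t hs hst
    rw [hdiff s t hs (le_trans hs hst)]
    have : ∫ r in s..t, g r ≤ ∫ r in s..t, m⁻¹ := by
      apply intervalIntegral.integral_mono_on hst
        (hgint s t hs (le_trans hs hst)) intervalIntegrable_const
      intro r _; exact hgub r
    simpa using this
  have hαmono : StrictMonoOn α (Ici σ) := by
    intro s hs t ht hst
    have := hlow s t hs hst.le
    nlinarith [inv_pos.mpr hM]
  have hασ : α σ = σ := by rw [hα]; simp
  have hαge : ∀ t ≥ σ, σ ≤ α t := by
    intro t ht
    have := hlow σ t le_rfl ht
    rw [hασ] at this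
    nlinarith [inv_pos.mpr hM, sub_nonneg.mpr ht]
  have hαcont : ContinuousOn α (Ici σ) := by
    have : LipschitzOnWith (Real.toNNReal m⁻¹) α (Ici σ) := by
      rw [lipschitzOnWith_iff_dist_le_mul]
      intro s hs t ht
      rcases le_total t s with hts | hst
      · have h1 := hup t s ht hts
        have h2 := hlow t s ht hts
        rw [Real.dist_eq, Real.dist_eq, abs_of_nonneg, abs_of_nonneg,
          Real.coe_toNNReal _ (le_of_lt (inv_pos.mpr hm))]
        · nlinarith
        · linarith
        · nlinarith [inv_pos.mpr hM]
      · have h1 := hup s t hs hst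
        have h2 := hlow s t hs hst
        rw [Real.dist_eq, Real.dist_eq, abs_of_nonpos, abs_of_nonpos,
          Real.coe_toNNReal _ (le_of_lt (inv_pos.mpr hm))]
        · nlinarith
        · linarith
        · nlinarith [inv_pos.mpr hM]
    exact this.continuousOn
  have hsurj : SurjOn α (Ici σ) (Ici σ) := by
    intro τ hτ
    have hτ' : σ ≤ τ := hτ
    set t := σ + M * (τ - σ) with ht_def
    have htσ : σ ≤ t := by nlinarith [sub_nonneg.mpr hτ']
    have h1 : τ ≤ α t := by
      have h4 := hlow σ t le_rfl htσ
      rw [hασ] at h4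
      have h5 : (t - σ) * M⁻¹ = τ - σ := by
        rw [ht_def]; field_simp; ring
      linarith [h5 ▸ h4]
    have h0 : α σ ≤ τ := by rw [hασ]; exact hτ'
    have := intermediate_value_Icc htσ (hαcont.mono (Icc_subset_Ici_self))
    have hmem : τ ∈ Icc (α σ) (α t) := ⟨h0, h1⟩
    obtain ⟨s, hs, hsa⟩ := this hmem
    exact ⟨s, hs.1, hsa⟩
  have hinj : InjOn α (Ici σ) := hαmono.injOn
  have hmaps : MapsTo α (Ici σ) (Ici σ) := fun t ht => hαge t ht
  have hbij : BijOn α (Ici σ) (Ici σ) := ⟨hmaps, hinj, hsurj⟩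
  refine ⟨hαmono, hαcont, hbij, ?_⟩
  set αinv := Function.invFunOn α (Ici σ) with hinv_def
  have hleft : ∀ t ≥ σ, αinv (α t) = t := fun t ht => hinj.leftInvOn_invFunOn ht
  have hright : ∀ τ ≥ σ, α (αinv τ) = τ := fun τ hτ =>
    Function.invFunOn_eq (by rcases hsurj hτ with ⟨s, hs, hsa⟩; exact ⟨s, hs, hsa⟩)
  have hinvmem : ∀ τ ≥ σ, αinv τ ∈ Ici σ := fun τ hτ =>
    Function.invFunOn_mem (by rcases hsurj hτ with ⟨s, hs, hsa⟩; exact ⟨s, hs, hsa⟩)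
  refine ⟨αinv, fun τ hτ => hinvmem τ hτ, hleft, hright, ?_⟩
  -- continuity of αinv on Ici σ via Lipschitz
  have hinvlip : ∀ p q, σ ≤ p → σ ≤ q → |αinv p - αinv q| ≤ M * |p - q| := by
    intro p q hp hq
    wlog hpq : αinv q ≤ αinv p generalizing p q
    · have := this q p hq hp (le_of_not_ge hpq)
      rw [abs_sub_comm, abs_sub_comm p q]; exact this
    have h1 := hlow (αinv q) (αinv p) (hinvmem q hq) hpq
    rw [hright p hp, hright q hq] at h1
    rw [abs_of_nonneg (sub_nonneg.mpr hpq)]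
    have h2 : p - q ≤ |p - q| := le_abs_self _
    have h3 : αinv p - αinv q ≤ M * (p - q) := by
      have := mul_le_mul_of_nonneg_right h1 hM.le
      calc αinv p - αinv q = (αinv p - αinv q) * M⁻¹ * M := by field_simp
        _ ≤ (p - q) * M := this
        _ = M * (p - q) := mul_comm _ _
    have h4 : M * (p - q) ≤ M * |p - q| := mul_le_mul_of_nonneg_left h2 hM.le
    linarith
  have hinvcont : ∀ τ > σ, ContinuousAt αinv τ := by
    intro τ hτ
    have : ContinuousOn αinv (Ici σ) := by
      apply LipschitzOnWith.continuousOn (K := Real.toNNReal M)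
      rw [lipschitzOnWith_iff_dist_le_mul]
      intro p hp q hq
      rw [Real.dist_eq, Real.dist_eq, Real.coe_toNNReal _ hM.le]
      exact hinvlip p q hp hq
    exact this.continuousAt (Ici_mem_nhds hτ)
  intro τ hτ
  set t := αinv τ with ht_def
  have htmem : σ ≤ t := hinvmem τ hτ.le
  have hαt : α t = τ := hright τ hτ.le
  have htgt : σ < t := by
    rcases lt_or_eq_of_le htmem with h' | h'
    · exact h'
    · exfalso; rw [← h', hασ] at hαt; exact hτ.ne' hαt.symm
  -- derivative of α at t
  have hαderiv : HasDerivAt α (g t) t := by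
    have hint : IntervalIntegrable g volume σ t := hgint σ t le_rfl htmem
    have hmeas : StronglyMeasurableAtFilter g (nhds t) := by
      refine ContinuousOn.stronglyMeasurableAtFilter isOpen_Ioi
        (hgcont.mono Ioi_subset_Ici_self) t htgt
    have hcont : ContinuousAt g t := by
      exact (hgcont.mono Ioi_subset_Ici_self).continuousAt (Ioi_mem_nhds htgt)
    have := (intervalIntegral.integral_hasDerivAt_right hint hmeas hcont).const_add σ
    have heq : (fun x => σ + ∫ r in σ..x, g r) = α := by
      funext x; rw [hα]
    rwa [heq] at this
  -- derivative of αinv at τ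
  have hinvderiv : HasDerivAt αinv (g t)⁻¹ τ := by
    apply HasDerivAt.of_local_left_inverse (hinvcont τ hτ) hαderiv (hgpos t).ne'
    filter_upwards [Ioi_mem_nhds hτ] with x hx
    exact hright x (le_of_lt hx)
  have hginv : (g t)⁻¹ = a (u t) := inv_inv _
  rw [hginv] at hinvderiv
  -- chain rule
  have hut : HasDerivAt u (B (u t) + (a (u t))⁻¹ • (lam • f (u t) + h (α t))) t := hde t htgt
  have := HasDerivAt.scomp τ hut hinvderiv
  have hw : (u ∘ αinv) τ = u t := rfl
  convert this using 1
  rw [hw, hαt, smul_add, smul_smul,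
    mul_inv_cancel₀ (hapos (u t)).ne', one_smul, add_assoc]
end
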